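/- arXiv:2407.04979 — 4 statements merged into one kernel-verified Lean document; each statement's English description precedes it below -/
import Mathlib

section
/- Let p ∈ ℝ with p ∉ {−(k+1)/2 : k ∈ ℕ₀}, let P = [[κ₁,κ₃],[κ₃,κ₂]] be a real symmetric 2×2 matrix with det P ≠ 0, and let ψ ∈ ℝ. Let κ ∈ ℂ with κ² = det P, set σ := 2p·κ₃ − ψ·κ₁ and α := σ/(2iκ) + p, and let (A,B) = Ξₚ(P,ψ). Then for all z ∈ ℂ: A(z) = e^{iκz}·[ (1/2)·M(α, 2p+1, −2iκz) + (1/2)·M(α+1, 2p+1, −2iκz) − (κ₃/(2p+1))·z·M(α+1, 2p+2, −2iκz) ] and B(z) = e^{iκz}·(κ₁/(2p+1))·z·M(α+1, 2p+2, −2iκz). -/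
open Matrix MeasureTheory Filter

noncomputable section

def matJ : Matrix (Fin 2) (Fin 2) ℝ := !![0, -1; 1, 0]

def Dpsi (p ψ a : ℝ) : Matrix (Fin 2) (Fin 2) ℝ :=
  if p = 0 then !![1, 0; ψ * Real.log a, 1]
  else !![1, 0; ψ / (2 * p), 1] * !![a ^ p, 0; 0, a ^ (-p)] * !![1, 0; -ψ / (2 * p), 1]

def HPpsi (p ψ : ℝ) (P : Matrix (Fin 2) (Fin 2) ℝ) (a : ℝ) : Matrix (Fin 2) (Fin 2) ℝ :=
  Dpsi p ψ a * P * (Dpsi p ψ a)ᵀ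

def SatRec (p : ℝ) (P : Matrix (Fin 2) (Fin 2) ℝ) (ψ : ℝ) (α β : ℕ → ℝ) : Prop :=
  α 0 = 1 ∧ β 0 = 0 ∧ ∀ n : ℕ,
    !![α (n + 1), β (n + 1)] =
      (-1 / (((n : ℝ) + 1) * (2 * p + (n : ℝ) + 1))) •
        (!![α n, β n] * (P * matJ * !![2 * p + (n : ℝ) + 1, 0; ψ, (n : ℝ) + 1]))

def genF (c : ℕ → ℝ) (z : ℂ) : ℂ := ∑' n : ℕ, (c n : ℂ) * z ^ n

def rowAB (p ψ : ℝ) (α β : ℕ → ℝ) (a : ℝ) (z : ℂ) : Matrix (Fin 1) (Fin 2) ℂ :=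
  !![((a ^ p : ℝ) : ℂ) * genF α ((a : ℂ) * z), ((a ^ p : ℝ) : ℂ) * genF β ((a : ℂ) * z)] *
    ((Dpsi p ψ a)⁻¹).map Complex.ofReal

/-- The rising factorial (Pochhammer symbol) (x)ₙ in ℂ. -/
def risingFac (x : ℂ) : ℕ → ℂ
  | 0 => 1
  | n + 1 => risingFac x n * (x + n)

/-- Kummer's confluent hypergeometric function M(a,b,z) = Σ (a)ₙ/(b)ₙ · zⁿ/n!. -/
def kummerM (a b z : ℂ) : ℂ :=
  ∑' n : ℕ, risingFac a n / risingFac b n * z ^ n / (n.factorial : ℂ)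

/-- The confluent hypergeometric limit function ₀F₁(b,z) = Σ 1/(b)ₙ · zⁿ/n!. -/
def hyp0F1 (b z : ℂ) : ℂ :=
  ∑' n : ℕ, (1 / risingFac b n) * z ^ n / (n.factorial : ℂ)

namespace Stmt13

lemma risingFac_zero (x : ℂ) : risingFac x 0 = 1 := rfl
lemma risingFac_succ (x : ℂ) (n : ℕ) : risingFac x (n+1) = risingFac x n * (x + n) := rfl

lemma risingFac_succ_left (x : ℂ) (n : ℕ) :
    risingFac x (n+1) = x * risingFac (x+1) n := by
  induction n with
  | zero => simp [risingFac]
  | succ n ih =>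
    rw [risingFac_succ, ih, risingFac_succ]
    push_cast
    ring

lemma risingFac_ne_zero {b : ℂ} (hb : ∀ k : ℕ, b + k ≠ 0) (n : ℕ) : risingFac b n ≠ 0 := by
  induction n with
  | zero => simp [risingFac]
  | succ n ih => exact mul_ne_zero ih (hb n)

/-- summand for the `t` (B-related) coefficient series -/
def pt (m b u : ℂ) (k l : ℕ) : ℂ :=
  risingFac (m+1) k * (-2*u)^k * u^l /
    (risingFac b (k+1) * (k.factorial : ℂ) * (l.factorial : ℂ))

/-- summand for the `s` (A-related) coefficient series -/
def ps (m b u : ℂ) (k l : ℕ) : ℂ :=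
  (risingFac m k + risingFac (m+1) k)/2 * (-2*u)^k * u^l /
    (risingFac b k * (k.factorial : ℂ) * (l.factorial : ℂ))

/-- telescoping certificate for identity I1 -/
def w1 (m b u : ℂ) (k l : ℕ) : ℂ :=
  (risingFac (m+1) k - risingFac m k)/2 * (-2*u)^k * u^l /
    (risingFac b k * (k.factorial : ℂ) * (l.factorial : ℂ))

/-- telescoping certificate for identity I2 -/
def w2 (m b u : ℂ) (k l : ℕ) : ℂ :=
  (k : ℂ) * risingFac (m+1) k * (-2*u)^k * u^l /
    (risingFac b k * (k.factorial : ℂ) * (l.factorial : ℂ))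

def tco (m b u : ℂ) : ℕ → ℂ
  | 0 => 0
  | n+1 => ∑ k ∈ Finset.range (n+1), pt m b u k (n-k)

def sco (m b u : ℂ) (n : ℕ) : ℂ := ∑ k ∈ Finset.range (n+1), ps m b u k (n-k)

section keys

variable {m b u : ℂ} (hb : ∀ k : ℕ, b + k ≠ 0)

include hb

lemma key1 (k q : ℕ) :
    (b + ((k:ℂ) + q + 1)) * pt m b u k (q+1) - ps m b u k (q+1)
      = w1 m b u k (q+1) - w1 m b u (k+1) q := by
  have hR := risingFac_ne_zero hb k
  have hR1 := risingFac_ne_zero hb (k+1)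
  have hfk : ((k.factorial : ℂ)) ≠ 0 := Nat.cast_ne_zero.2 k.factorial_ne_zero
  have hfk1 : (((k+1).factorial : ℂ)) ≠ 0 := Nat.cast_ne_zero.2 (k+1).factorial_ne_zero
  have hfq : ((q.factorial : ℂ)) ≠ 0 := Nat.cast_ne_zero.2 q.factorial_ne_zero
  have hfq1 : (((q+1).factorial : ℂ)) ≠ 0 := Nat.cast_ne_zero.2 (q+1).factorial_ne_zero
  rw [pt, ps, w1, w1, ← mul_div_assoc,
    div_sub_div _ _ (mul_ne_zero (mul_ne_zero hR1 hfk) hfq1)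
      (mul_ne_zero (mul_ne_zero hR hfk) hfq1),
    div_sub_div _ _ (mul_ne_zero (mul_ne_zero hR hfk) hfq1)
      (mul_ne_zero (mul_ne_zero hR1 hfk1) hfq),
    div_eq_div_iff
      (mul_ne_zero (mul_ne_zero (mul_ne_zero hR1 hfk) hfq1)
        (mul_ne_zero (mul_ne_zero hR hfk) hfq1))
      (mul_ne_zero (mul_ne_zero (mul_ne_zero hR hfk) hfq1)
        (mul_ne_zero (mul_ne_zero hR1 hfk1) hfq)),
    risingFac_succ_left m k, risingFac_succ (m+1) k, risingFac_succ b k,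
    Nat.factorial_succ k, Nat.factorial_succ q, pow_succ u q]
  push_cast
  ring

lemma key1b (n : ℕ) :
    (b + (n:ℂ)) * pt m b u n 0 - ps m b u n 0 = w1 m b u n 0 := by
  have hR := risingFac_ne_zero hb n
  have hR1 := risingFac_ne_zero hb (n+1)
  have hfn : ((n.factorial : ℂ)) ≠ 0 := Nat.cast_ne_zero.2 n.factorial_ne_zero
  have hf0 : (((0:ℕ).factorial : ℂ)) ≠ 0 := by norm_num
  rw [pt, ps, w1, ← mul_div_assoc,
    div_sub_div _ _ (mul_ne_zero (mul_ne_zero hR1 hfn) hf0)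
      (mul_ne_zero (mul_ne_zero hR hfn) hf0),
    div_eq_div_iff
      (mul_ne_zero (mul_ne_zero (mul_ne_zero hR1 hfn) hf0)
        (mul_ne_zero (mul_ne_zero hR hfn) hf0))
      (mul_ne_zero (mul_ne_zero hR hfn) hf0),
    risingFac_succ b n]
  push_cast
  ring

lemma key2i (k q : ℕ) :
    ((k:ℂ) + q + 2) * (b + ((k:ℂ) + q + 2)) * pt m b u k (q+2)
      + u*(2*m - b + 1) * pt m b u k (q+1) - u^2 * pt m b u k q
      = w2 m b u k (q+2) - w2 m b u (k+1) (q+1) := by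
  have hR := risingFac_ne_zero hb k
  have hR1 := risingFac_ne_zero hb (k+1)
  have hfk : ((k.factorial : ℂ)) ≠ 0 := Nat.cast_ne_zero.2 k.factorial_ne_zero
  have hfk1 : (((k+1).factorial : ℂ)) ≠ 0 := Nat.cast_ne_zero.2 (k+1).factorial_ne_zero
  have hfq : ((q.factorial : ℂ)) ≠ 0 := Nat.cast_ne_zero.2 q.factorial_ne_zero
  have hfq1 : (((q+1).factorial : ℂ)) ≠ 0 := Nat.cast_ne_zero.2 (q+1).factorial_ne_zero
  have hfq2 : (((q+2).factorial : ℂ)) ≠ 0 := Nat.cast_ne_zero.2 (q+2).factorial_ne_zero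
  rw [pt, pt, pt, w2, w2, ← mul_div_assoc, ← mul_div_assoc, ← mul_div_assoc,
    div_add_div _ _ (mul_ne_zero (mul_ne_zero hR1 hfk) hfq2)
      (mul_ne_zero (mul_ne_zero hR1 hfk) hfq1),
    div_sub_div _ _
      (mul_ne_zero (mul_ne_zero (mul_ne_zero hR1 hfk) hfq2)
        (mul_ne_zero (mul_ne_zero hR1 hfk) hfq1))
      (mul_ne_zero (mul_ne_zero hR1 hfk) hfq),
    div_sub_div _ _ (mul_ne_zero (mul_ne_zero hR hfk) hfq2)
      (mul_ne_zero (mul_ne_zero hR1 hfk1) hfq1),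
    div_eq_div_iff
      (mul_ne_zero
        (mul_ne_zero (mul_ne_zero (mul_ne_zero hR1 hfk) hfq2)
          (mul_ne_zero (mul_ne_zero hR1 hfk) hfq1))
        (mul_ne_zero (mul_ne_zero hR1 hfk) hfq))
      (mul_ne_zero (mul_ne_zero (mul_ne_zero hR hfk) hfq2)
        (mul_ne_zero (mul_ne_zero hR1 hfk1) hfq1)),
    risingFac_succ (m+1) k, risingFac_succ b k,
    Nat.factorial_succ k, Nat.factorial_succ (q+1), Nat.factorial_succ q,
    pow_succ u (q+1), pow_succ u q, pow_succ (-2*u) k]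
  push_cast
  ring

lemma key2ii (n : ℕ) :
    ((n:ℂ) + 1) * (b + (n:ℂ) + 1) * pt m b u n 1 + u*(2*m - b + 1) * pt m b u n 0
      = w2 m b u n 1 - w2 m b u (n+1) 0 := by
  have hR := risingFac_ne_zero hb n
  have hR1 := risingFac_ne_zero hb (n+1)
  have hfn : ((n.factorial : ℂ)) ≠ 0 := Nat.cast_ne_zero.2 n.factorial_ne_zero
  have hfn1 : (((n+1).factorial : ℂ)) ≠ 0 := Nat.cast_ne_zero.2 (n+1).factorial_ne_zero
  have hf0 : (((0:ℕ).factorial : ℂ)) ≠ 0 := by norm_num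
  have hf1 : (((1:ℕ).factorial : ℂ)) ≠ 0 := by norm_num
  rw [pt, pt, w2, w2, ← mul_div_assoc, ← mul_div_assoc,
    div_add_div _ _ (mul_ne_zero (mul_ne_zero hR1 hfn) hf1)
      (mul_ne_zero (mul_ne_zero hR1 hfn) hf0),
    div_sub_div _ _ (mul_ne_zero (mul_ne_zero hR hfn) hf1)
      (mul_ne_zero (mul_ne_zero hR1 hfn1) hf0),
    div_eq_div_iff
      (mul_ne_zero (mul_ne_zero (mul_ne_zero hR1 hfn) hf1)
        (mul_ne_zero (mul_ne_zero hR1 hfn) hf0))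
      (mul_ne_zero (mul_ne_zero (mul_ne_zero hR hfn) hf1)
        (mul_ne_zero (mul_ne_zero hR1 hfn1) hf0)),
    risingFac_succ (m+1) n, risingFac_succ b n, Nat.factorial_succ n,
    pow_succ (-2*u) n]
  simp only [Nat.factorial_zero, Nat.factorial_one, Nat.cast_one]
  push_cast
  ring

lemma key2iii (n : ℕ) :
    ((n:ℂ) + 1) * (b + (n:ℂ) + 1) * pt m b u (n+1) 0 = w2 m b u (n+1) 0 := by
  have hR := risingFac_ne_zero hb n
  have hR1 := risingFac_ne_zero hb (n+1)
  have hR2 := risingFac_ne_zero hb (n+2)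
  have hfn1 : (((n+1).factorial : ℂ)) ≠ 0 := Nat.cast_ne_zero.2 (n+1).factorial_ne_zero
  have hf0 : (((0:ℕ).factorial : ℂ)) ≠ 0 := by norm_num
  rw [pt, w2, ← mul_div_assoc,
    div_eq_div_iff (mul_ne_zero (mul_ne_zero hR2 hfn1) hf0)
      (mul_ne_zero (mul_ne_zero hR1 hfn1) hf0),
    risingFac_succ b (n+1), risingFac_succ b n]
  push_cast
  ring

/-- Identity I1 : (b+n) t_{n+1} = s_n -/
lemma identI1 (n : ℕ) : (b + (n:ℂ)) * tco m b u (n+1) = sco m b u n := by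
  have hmain : ∀ k ∈ Finset.range n,
      ((b + (n:ℂ)) * pt m b u k (n-k) - ps m b u k (n-k))
        = (fun j => w1 m b u j (n-j)) k - (fun j => w1 m b u j (n-j)) (k+1) := by
    intro k hk
    rw [Finset.mem_range] at hk
    obtain ⟨q, hq⟩ : ∃ q, n - k = q + 1 := ⟨n - (k+1), by omega⟩
    have h2 : n - (k+1) = q := by omega
    have h3 : (n:ℂ) = (k:ℂ) + (q:ℂ) + 1 := by
      have h : n = k + q + 1 := by omega
      rw [h]; push_cast; ring
    simp only []
    rw [hq, h2, h3]
    linear_combination key1 hb k q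
  have htel : ∑ k ∈ Finset.range n,
      ((b + (n:ℂ)) * pt m b u k (n-k) - ps m b u k (n-k))
      = (fun j => w1 m b u j (n-j)) 0 - (fun j => w1 m b u j (n-j)) n := by
    rw [Finset.sum_congr rfl hmain]
    exact Finset.sum_range_sub' (fun j => w1 m b u j (n-j)) n
  simp only [Nat.sub_zero, Nat.sub_self] at htel
  have hw0 : w1 m b u 0 n = 0 := by
    simp [w1, risingFac_zero]
  have hbd := key1b (m := m) (u := u) hb n
  have eT : tco m b u (n+1) = (∑ k ∈ Finset.range n, pt m b u k (n-k)) + pt m b u n 0 := by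
    simp only [tco]
    rw [Finset.sum_range_succ, Nat.sub_self]
  have eS : sco m b u n = (∑ k ∈ Finset.range n, ps m b u k (n-k)) + ps m b u n 0 := by
    rw [sco, Finset.sum_range_succ, Nat.sub_self]
  have hms : (b + (n:ℂ)) * ∑ k ∈ Finset.range n, pt m b u k (n-k)
      = ∑ k ∈ Finset.range n, ((b + (n:ℂ)) * pt m b u k (n-k)) := Finset.mul_sum _ _ _
  have hsub : ∑ k ∈ Finset.range n,
      ((b + (n:ℂ)) * pt m b u k (n-k) - ps m b u k (n-k))
      = ∑ k ∈ Finset.range n, ((b + (n:ℂ)) * pt m b u k (n-k))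
        - ∑ k ∈ Finset.range n, ps m b u k (n-k) := Finset.sum_sub_distrib _ _
  linear_combination (b + (n:ℂ)) * eT - eS + hms - hsub + htel + hbd + hw0

/-- Identity I2 : (n+1)(b+n+1) t_{n+2} + u(2m-b+1) t_{n+1} - u² t_n = 0 -/
lemma identI2 (n : ℕ) : ((n:ℂ)+1) * (b+(n:ℂ)+1) * tco m b u (n+2)
    + u*(2*m-b+1) * tco m b u (n+1) - u^2 * tco m b u n = 0 := by
  have e2 : tco m b u (n+2)
      = (∑ k ∈ Finset.range n, pt m b u k (n+1-k)) + pt m b u n 1 + pt m b u (n+1) 0 := by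
    have h1 : n + 1 - n = 1 := by omega
    have h2 : n + 1 - (n+1) = 0 := by omega
    simp only [tco]
    rw [Finset.sum_range_succ, Finset.sum_range_succ, h1, h2]
  have e1 : tco m b u (n+1) = (∑ k ∈ Finset.range n, pt m b u k (n-k)) + pt m b u n 0 := by
    simp only [tco]
    rw [Finset.sum_range_succ, Nat.sub_self]
  have e0 : tco m b u n = ∑ k ∈ Finset.range n, pt m b u k (n-1-k) := by
    cases n with
    | zero => simp [tco]
    | succ n =>
      simp only [tco]
      apply Finset.sum_congr rfl
      intro k _
      have h : n + 1 - 1 - k = n - k := by omega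
      rw [h]
  have hmain : ∀ k ∈ Finset.range n,
      (((n:ℂ)+1) * (b+(n:ℂ)+1) * pt m b u k (n+1-k)
        + u*(2*m-b+1) * pt m b u k (n-k) - u^2 * pt m b u k (n-1-k))
      = (fun j => w2 m b u j (n+1-j)) k - (fun j => w2 m b u j (n+1-j)) (k+1) := by
    intro k hk
    rw [Finset.mem_range] at hk
    obtain ⟨q, hq0⟩ : ∃ q, n - 1 - k = q := ⟨n - 1 - k, rfl⟩
    have hq1 : n - k = q + 1 := by omega
    have hq2 : n + 1 - k = q + 2 := by omega
    have hq3 : n + 1 - (k+1) = q + 1 := by omega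
    have h3 : (n:ℂ) = (k:ℂ) + (q:ℂ) + 1 := by
      have h : n = k + q + 1 := by omega
      rw [h]; push_cast; ring
    simp only []
    rw [hq0, hq1, hq2, hq3, h3]
    linear_combination key2i hb k q
  have htel : ∑ k ∈ Finset.range n,
      (((n:ℂ)+1) * (b+(n:ℂ)+1) * pt m b u k (n+1-k)
        + u*(2*m-b+1) * pt m b u k (n-k) - u^2 * pt m b u k (n-1-k))
      = (fun j => w2 m b u j (n+1-j)) 0 - (fun j => w2 m b u j (n+1-j)) n := by
    rw [Finset.sum_congr rfl hmain]
    exact Finset.sum_range_sub' (fun j => w2 m b u j (n+1-j)) n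
  have h1 : n + 1 - n = 1 := by omega
  simp only [Nat.sub_zero, h1] at htel
  have hw0 : w2 m b u 0 (n+1) = 0 := by
    simp [w2]
  have hb2 := key2ii (m := m) (u := u) hb n
  have hb3 := key2iii (m := m) (u := u) hb n
  have hms2 : ((n:ℂ)+1) * (b+(n:ℂ)+1) * ∑ k ∈ Finset.range n, pt m b u k (n+1-k)
      = ∑ k ∈ Finset.range n, (((n:ℂ)+1) * (b+(n:ℂ)+1) * pt m b u k (n+1-k)) :=
    Finset.mul_sum _ _ _
  have hms1 : u*(2*m-b+1) * ∑ k ∈ Finset.range n, pt m b u k (n-k)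
      = ∑ k ∈ Finset.range n, (u*(2*m-b+1) * pt m b u k (n-k)) := Finset.mul_sum _ _ _
  have hms0 : u^2 * ∑ k ∈ Finset.range n, pt m b u k (n-1-k)
      = ∑ k ∈ Finset.range n, (u^2 * pt m b u k (n-1-k)) := Finset.mul_sum _ _ _
  have hsub : ∑ k ∈ Finset.range n,
      (((n:ℂ)+1) * (b+(n:ℂ)+1) * pt m b u k (n+1-k)
        + u*(2*m-b+1) * pt m b u k (n-k) - u^2 * pt m b u k (n-1-k))
      = (∑ k ∈ Finset.range n, (((n:ℂ)+1) * (b+(n:ℂ)+1) * pt m b u k (n+1-k))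
          + ∑ k ∈ Finset.range n, (u*(2*m-b+1) * pt m b u k (n-k)))
        - ∑ k ∈ Finset.range n, (u^2 * pt m b u k (n-1-k)) := by
    rw [← Finset.sum_add_distrib, ← Finset.sum_sub_distrib]
  linear_combination (((n:ℂ)+1) * (b+(n:ℂ)+1)) * e2 + (u*(2*m-b+1)) * e1 - u^2 * e0
    + hms2 + hms1 - hms0 - hsub + htel + hb2 + hb3 + hw0

end keys


lemma summable_norm_kummer_term (a : ℂ) {b : ℂ} (hb : ∀ k : ℕ, b + k ≠ 0) (v : ℂ) :
    Summable fun n : ℕ => ‖risingFac a n / risingFac b n * v ^ n / (n.factorial : ℂ)‖ := by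
  obtain ⟨δ, hδ0, hδ⟩ : ∃ δ : ℝ, 0 < δ ∧ ∀ k : ℕ, δ ≤ ‖b + (k:ℂ)‖ := by
    set N := Nat.ceil ‖b‖ + 1 with hN
    set S : Finset ℝ := insert 1 ((Finset.range N).image fun k : ℕ => ‖b + (k:ℂ)‖) with hS
    have hne : S.Nonempty := ⟨1, Finset.mem_insert_self _ _⟩
    refine ⟨S.min' hne, ?_, ?_⟩
    · rcases Finset.mem_insert.1 (S.min'_mem hne) with h | h
      · rw [h]; norm_num
      · obtain ⟨k, _, hk⟩ := Finset.mem_image.1 h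
        rw [← hk]
        exact norm_pos_iff.2 (hb k)
    · intro k
      by_cases hk : k < N
      · exact Finset.min'_le _ _
          (Finset.mem_insert_of_mem (Finset.mem_image.2 ⟨k, Finset.mem_range.2 hk, rfl⟩))
      · refine le_trans (Finset.min'_le _ 1 (Finset.mem_insert_self _ _)) ?_
        have h1 : ‖(k:ℂ)‖ - ‖-b‖ ≤ ‖(k:ℂ) - -b‖ := norm_sub_norm_le _ _
        have h2 : ‖(k:ℂ)‖ = (k:ℝ) := by
          rw [Complex.norm_natCast]
        have h3 : (N:ℝ) ≤ (k:ℝ) := Nat.cast_le.2 (le_of_not_gt hk)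
        have h4 : ‖b‖ ≤ (Nat.ceil ‖b‖ : ℝ) := Nat.le_ceil _
        have h5 : (N:ℝ) = (Nat.ceil ‖b‖ : ℝ) + 1 := by rw [hN]; push_cast; ring
        have h6 : ‖(k:ℂ) - -b‖ = ‖b + k‖ := by rw [sub_neg_eq_add]; rw [add_comm]
        rw [h6, h2, norm_neg] at h1
        linarith
  set C := 1 + ‖a - b‖ / δ with hC
  have hrat : ∀ n : ℕ, ‖risingFac a n‖ ≤ C ^ n * ‖risingFac b n‖ := by
    intro n; induction n with
    | zero => simp [risingFac]
    | succ n ih =>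
      rw [risingFac_succ, risingFac_succ, norm_mul, norm_mul, pow_succ]
      have h1 : ‖a + n‖ ≤ C * ‖b + n‖ := by
        have h2 : ‖a + (n:ℂ)‖ ≤ ‖b + n‖ + ‖a - b‖ := by
          have he : a + (n:ℂ) = (b + n) + (a - b) := by ring
          rw [he]; exact norm_add_le _ _
        have h3 : ‖a - b‖ ≤ ‖a - b‖ / δ * ‖b + (n:ℂ)‖ := by
          rw [div_mul_eq_mul_div, le_div_iff₀ hδ0]
          exact mul_le_mul_of_nonneg_left (hδ n) (norm_nonneg _)
        calc ‖a + (n:ℂ)‖ ≤ ‖b + (n:ℂ)‖ + ‖a - b‖ := h2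
          _ ≤ ‖b + (n:ℂ)‖ + ‖a - b‖/δ * ‖b + (n:ℂ)‖ := by linarith
          _ = C * ‖b + (n:ℂ)‖ := by rw [hC]; ring
      calc ‖risingFac a n‖ * ‖a + (n:ℂ)‖
          ≤ (C^n * ‖risingFac b n‖) * (C * ‖b + (n:ℂ)‖) :=
            mul_le_mul ih h1 (norm_nonneg _) (by positivity)
        _ = C^n * C * (‖risingFac b n‖ * ‖b + (n:ℂ)‖) := by ring
  apply Summable.of_nonneg_of_le (fun n => norm_nonneg _) _
    (Real.summable_pow_div_factorial (C * ‖v‖))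
  intro n
  have hpos : 0 < ‖risingFac b n‖ := norm_pos_iff.2 (risingFac_ne_zero hb n)
  have hfact : (0:ℝ) < (n.factorial : ℝ) := by positivity
  rw [norm_div, norm_mul, norm_div, norm_pow, Complex.norm_natCast, mul_pow]
  have hd : ‖risingFac a n‖ / ‖risingFac b n‖ ≤ C^n := by
    rw [div_le_iff₀ hpos]; exact hrat n
  apply (div_le_div_iff_of_pos_right hfact).2
  exact mul_le_mul_of_nonneg_right hd (pow_nonneg (norm_nonneg _) n)

lemma summable_norm_exp_term (w : ℂ) :
    Summable fun n : ℕ => ‖w ^ n / (n.factorial : ℂ)‖ := by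
  refine (Real.summable_pow_div_factorial ‖w‖).congr fun n => ?_
  rw [norm_div, norm_pow, Complex.norm_natCast]

lemma exp_tsum (w : ℂ) : Complex.exp w = ∑' n : ℕ, w ^ n / (n.factorial : ℂ) := by
  rw [Complex.exp_eq_exp_ℂ, NormedSpace.exp_eq_tsum_div]


lemma cauchy (a : ℂ) {bb : ℂ} (hb : ∀ k : ℕ, bb + k ≠ 0) (v w : ℂ) :
    kummerM a bb v * Complex.exp w
      = ∑' n : ℕ, ∑ k ∈ Finset.range (n+1),
          (risingFac a k / risingFac bb k * v ^ k / (k.factorial : ℂ))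
            * (w ^ (n-k) / ((n-k).factorial : ℂ)) := by
  unfold kummerM
  rw [exp_tsum]
  exact tsum_mul_tsum_eq_tsum_sum_range_of_summable_norm
    (summable_norm_kummer_term a hb v) (summable_norm_exp_term w)

lemma summable_cauchy (a : ℂ) {bb : ℂ} (hb : ∀ k : ℕ, bb + k ≠ 0) (v w : ℂ) :
    Summable (fun n : ℕ => ∑ k ∈ Finset.range (n+1),
      (risingFac a k / risingFac bb k * v ^ k / (k.factorial : ℂ))
        * (w ^ (n-k) / ((n-k).factorial : ℂ))) :=
  (summable_norm_sum_mul_range_of_summable_norm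
    (summable_norm_kummer_term a hb v) (summable_norm_exp_term w)).of_norm

lemma conv_t {m b u : ℂ} (hb : ∀ k : ℕ, b + k ≠ 0) (hb1 : ∀ k : ℕ, (b+1) + k ≠ 0)
    (z : ℂ) (n : ℕ) :
    ∑ k ∈ Finset.range (n+1),
      (risingFac (m+1) k / risingFac (b+1) k * (-2*u*z) ^ k / (k.factorial : ℂ))
        * ((u*z) ^ (n-k) / ((n-k).factorial : ℂ))
      = b * tco m b u (n+1) * z^n := by
  have hb0 : b ≠ 0 := by simpa using hb 0
  simp only [tco]
  rw [Finset.mul_sum, Finset.sum_mul]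
  apply Finset.sum_congr rfl
  intro k hk
  rw [Finset.mem_range] at hk
  have hk' : k ≤ n := by omega
  have hz : z^k * z^(n-k) = z^n := by rw [← pow_add, Nat.add_sub_cancel' hk']
  rw [← hz, pt, risingFac_succ_left b k, mul_pow, mul_pow]
  have hR := risingFac_ne_zero hb1 k
  have hfk : ((k.factorial : ℂ)) ≠ 0 := Nat.cast_ne_zero.2 k.factorial_ne_zero
  have hfnk : (((n-k).factorial : ℂ)) ≠ 0 := Nat.cast_ne_zero.2 (n-k).factorial_ne_zero
  field_simp
  ring

lemma conv_s {m b u : ℂ} (hb : ∀ k : ℕ, b + k ≠ 0) (z : ℂ) (n : ℕ) :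
    (1/2 : ℂ) * ∑ k ∈ Finset.range (n+1),
        (risingFac m k / risingFac b k * (-2*u*z) ^ k / (k.factorial : ℂ))
          * ((u*z) ^ (n-k) / ((n-k).factorial : ℂ))
      + (1/2 : ℂ) * ∑ k ∈ Finset.range (n+1),
        (risingFac (m+1) k / risingFac b k * (-2*u*z) ^ k / (k.factorial : ℂ))
          * ((u*z) ^ (n-k) / ((n-k).factorial : ℂ))
      = sco m b u n * z^n := by
  rw [sco, Finset.sum_mul, Finset.mul_sum, Finset.mul_sum, ← Finset.sum_add_distrib]
  apply Finset.sum_congr rfl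
  intro k hk
  rw [Finset.mem_range] at hk
  have hk' : k ≤ n := by omega
  have hz : z^k * z^(n-k) = z^n := by rw [← pow_add, Nat.add_sub_cancel' hk']
  rw [← hz, ps, mul_pow, mul_pow]
  have hR := risingFac_ne_zero hb k
  have hfk : ((k.factorial : ℂ)) ≠ 0 := Nat.cast_ne_zero.2 k.factorial_ne_zero
  have hfnk : (((n-k).factorial : ℂ)) ≠ 0 := Nat.cast_ne_zero.2 (n-k).factorial_ne_zero
  field_simp
  ring

end Stmt13

/-- explicit formulae for (A,B) = Ξₚ(P,ψ) in terms of Kummer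
functions when det P ≠ 0. -/
theorem statement13 (p : ℝ) (hp : ∀ k : ℕ, p ≠ -((k : ℝ) + 1) / 2)
    (κ1 κ2 κ3 ψ : ℝ)
    (hdet : (!![κ1, κ3; κ3, κ2] : Matrix (Fin 2) (Fin 2) ℝ).det ≠ 0)
    (κ : ℂ) (hκ : κ ^ 2 = ((!![κ1, κ3; κ3, κ2] : Matrix (Fin 2) (Fin 2) ℝ).det : ℂ))
    (σ : ℝ) (hσ : σ = 2 * p * κ3 - ψ * κ1)
    (m : ℂ) (hm : m = (σ : ℂ) / (2 * Complex.I * κ) + (p : ℂ))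
    (al bt : ℕ → ℝ) (hrec : SatRec p !![κ1, κ3; κ3, κ2] ψ al bt)
    (A B : ℂ → ℂ)
    (hA : ∀ z : ℂ, HasSum (fun n : ℕ => (al n : ℂ) * z ^ n) (A z))
    (hB : ∀ z : ℂ, HasSum (fun n : ℕ => (bt n : ℂ) * z ^ n) (B z)) :
    ∀ z : ℂ,
      A z = Complex.exp (Complex.I * κ * z) *
        ((1/2) * kummerM m (2 * (p : ℂ) + 1) (-2 * Complex.I * κ * z)
          + (1/2) * kummerM (m + 1) (2 * (p : ℂ) + 1) (-2 * Complex.I * κ * z)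
          - (κ3 : ℂ) / (2 * (p : ℂ) + 1) * z *
              kummerM (m + 1) (2 * (p : ℂ) + 2) (-2 * Complex.I * κ * z)) ∧
      B z = Complex.exp (Complex.I * κ * z) * (κ1 : ℂ) / (2 * (p : ℂ) + 1) * z *
              kummerM (m + 1) (2 * (p : ℂ) + 2) (-2 * Complex.I * κ * z) := by
  classical
  -- abbreviations
  set u : ℂ := Complex.I * κ with hudef
  have hdetR : (!![κ1, κ3; κ3, κ2] : Matrix (Fin 2) (Fin 2) ℝ).det = κ1*κ2 - κ3*κ3 := by
    rw [Matrix.det_fin_two_of]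
  have hκ0 : κ ≠ 0 := by
    intro h
    apply hdet
    have : ((!![κ1, κ3; κ3, κ2] : Matrix (Fin 2) (Fin 2) ℝ).det : ℂ) = 0 := by
      rw [← hκ, h]; ring
    exact_mod_cast this
  have hu0 : u ≠ 0 := mul_ne_zero Complex.I_ne_zero hκ0
  have hdC : (κ1:ℂ)*κ2 - (κ3:ℂ)^2 = -u^2 := by
    have h1 : ((!![κ1, κ3; κ3, κ2] : Matrix (Fin 2) (Fin 2) ℝ).det : ℂ)
        = (κ1:ℂ)*κ2 - (κ3:ℂ)^2 := by
      rw [hdetR]; push_cast; ring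
    rw [← h1, ← hκ, hudef, mul_pow, Complex.I_sq]; ring
  have hbC : ∀ k : ℕ, (2*(p:ℂ)+1) + k ≠ 0 := by
    intro k h
    have h2 : ((2*p+1+k : ℝ) : ℂ) = 0 := by push_cast; linear_combination h
    rw [Complex.ofReal_eq_zero] at h2
    exact hp k (by linarith)
  have hb1C : ∀ k : ℕ, ((2*(p:ℂ)+1)+1) + k ≠ 0 := by
    intro k h
    exact hbC (k+1) (by push_cast; linear_combination h)
  have hsg : u*(2*m - (2*(p:ℂ)+1) + 1) = 2*(p:ℂ)*κ3 - (ψ:ℂ)*κ1 := by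
    have h2 : (2:ℂ)*Complex.I*κ ≠ 0 :=
      mul_ne_zero (mul_ne_zero two_ne_zero Complex.I_ne_zero) hκ0
    have h1 : (σ:ℂ) = 2*Complex.I*κ*(m - p) := by
      rw [hm]; field_simp; ring
    have hσc : (σ:ℂ) = 2*(p:ℂ)*κ3 - (ψ:ℂ)*κ1 := by
      rw [hσ]; push_cast; ring
    rw [hudef]
    linear_combination (-1 : ℂ) * h1 + hσc
  -- the coefficient identification
  have key : ∀ n : ℕ, (al n : ℂ) = Stmt13.sco m (2*(p:ℂ)+1) u n
      - κ3 * Stmt13.tco m (2*(p:ℂ)+1) u n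
      ∧ (bt n : ℂ) = κ1 * Stmt13.tco m (2*(p:ℂ)+1) u n := by
    intro n
    induction n with
    | zero =>
      constructor
      · rw [hrec.1]
        norm_num [Stmt13.sco, Stmt13.ps, Stmt13.tco, risingFac]
      · rw [hrec.2.1]
        norm_num [Stmt13.tco]
    | succ n ih =>
      obtain ⟨ihA, ihB⟩ := ih
      have hcc : ((n:ℂ)+1)*((2*(p:ℂ)+1)+(n:ℂ)) ≠ 0 :=
        mul_ne_zero (Nat.cast_add_one_ne_zero n) (hbC n)
      have hI1n := Stmt13.identI1 (m := m) (u := u) hbC n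
      have hI1n1 := Stmt13.identI1 (m := m) (u := u) hbC (n+1)
      push_cast at hI1n1
      have hI2 := Stmt13.identI2 (m := m) (u := u) hbC n
      -- extract recurrence equations
      have h := hrec.2.2 n
      have e1 := congrFun (congrFun h 0) 0
      have e2 := congrFun (congrFun h 0) 1
      simp [matJ, Matrix.mul_apply, Fin.sum_univ_two, Matrix.smul_apply] at e1 e2
      have e1R : al (n+1) = (-1 / (((n : ℝ) + 1) * (2 * p + (n : ℝ) + 1))) *
          (al n * (κ3 * (2 * p + (n : ℝ) + 1) - κ1 * ψ)
            + bt n * (κ2 * (2 * p + (n : ℝ) + 1) - κ3 * ψ)) := by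
        rw [e1]; ring
      have e2R : bt (n+1) = (-1 / (((n : ℝ) + 1) * (2 * p + (n : ℝ) + 1))) *
          (al n * (-(κ1 * ((n:ℝ)+1))) + bt n * (-(κ3 * ((n:ℝ)+1)))) := by
        rw [e2]; ring
      have e1C := congrArg (fun x : ℝ => (x : ℂ)) e1R
      have e2C := congrArg (fun x : ℝ => (x : ℂ)) e2R
      push_cast at e1C e2C
      have hn1 : ((n:ℂ)+1) ≠ 0 := Nat.cast_add_one_ne_zero n
      have hpn : (2*(p:ℂ)+(n:ℂ)+1) ≠ 0 := by
        intro h'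
        exact hbC n (by linear_combination h')
      have E1 : ((n:ℂ)+1)*((2*(p:ℂ)+1)+(n:ℂ))*((al (n+1) : ℝ) : ℂ)
          = -( ((al n : ℝ):ℂ) * ((κ3:ℂ)*((2*(p:ℂ)+1)+(n:ℂ)) - (κ1:ℂ)*(ψ:ℂ))
            + ((bt n : ℝ):ℂ) * ((κ2:ℂ)*((2*(p:ℂ)+1)+(n:ℂ)) - (κ3:ℂ)*(ψ:ℂ)) ) := by
        rw [e1C]
        field_simp
        ring
      have E2 : ((n:ℂ)+1)*((2*(p:ℂ)+1)+(n:ℂ))*((bt (n+1) : ℝ) : ℂ)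
          = -( ((al n : ℝ):ℂ) * (-((κ1:ℂ)*((n:ℂ)+1)))
            + ((bt n : ℝ):ℂ) * (-((κ3:ℂ)*((n:ℂ)+1))) ) := by
        rw [e2C]
        field_simp
        ring
      rw [ihA, ihB] at E1 E2
      constructor
      · apply mul_left_cancel₀ hcc
        rw [E1]
        linear_combination (-(( 2*(p:ℂ)+1)+(n:ℂ)))*hI2
          + (((n:ℂ)+1)*((2*(p:ℂ)+1)+(n:ℂ)))*hI1n1
          + ((κ3:ℂ)*((2*(p:ℂ)+1)+(n:ℂ)) - (κ1:ℂ)*(ψ:ℂ))*hI1n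
          + (((2*(p:ℂ)+1)+(n:ℂ)) * Stmt13.tco m (2*(p:ℂ)+1) u (n+1))*hsg
          + (-(((2*(p:ℂ)+1)+(n:ℂ)) * Stmt13.tco m (2*(p:ℂ)+1) u n))*hdC
      · apply mul_left_cancel₀ hcc
        rw [E2]
        linear_combination (-(((n:ℂ))+1)*(κ1:ℂ))*hI1n
  -- the analytic identification
  intro z
  have harg : (-2*Complex.I*κ*z : ℂ) = -2*u*z := by rw [hudef]; ring
  have harg2 : (2*(p:ℂ)+2) = (2*(p:ℂ)+1)+1 := by ring
  have hexpz : Complex.I*κ*z = u*z := by rw [hudef]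
  rw [harg, harg2, hexpz]
  -- Cauchy products
  have hC1 := Stmt13.cauchy (bb := 2*(p:ℂ)+1) m hbC (-2*u*z) (u*z)
  have hC2 := Stmt13.cauchy (bb := 2*(p:ℂ)+1) (m+1) hbC (-2*u*z) (u*z)
  have hC3 := Stmt13.cauchy (bb := (2*(p:ℂ)+1)+1) (m+1) hb1C (-2*u*z) (u*z)
  have hS1 := Stmt13.summable_cauchy (bb := 2*(p:ℂ)+1) m hbC (-2*u*z) (u*z)
  have hS2 := Stmt13.summable_cauchy (bb := 2*(p:ℂ)+1) (m+1) hbC (-2*u*z) (u*z)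
  have hS3 := Stmt13.summable_cauchy (bb := (2*(p:ℂ)+1)+1) (m+1) hb1C (-2*u*z) (u*z)
  have hb0 : (2*(p:ℂ)+1) ≠ 0 := by simpa using hbC 0
  -- the t-series
  have hTconv := Stmt13.conv_t (m := m) (u := u) hbC hb1C z
  have hSt1 : Summable (fun n : ℕ => (2*(p:ℂ)+1) * Stmt13.tco m (2*(p:ℂ)+1) u (n+1) * z^n) :=
    hS3.congr hTconv
  have hTsum1 : ∑' n : ℕ, (2*(p:ℂ)+1) * Stmt13.tco m (2*(p:ℂ)+1) u (n+1) * z^n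
      = kummerM (m+1) ((2*(p:ℂ)+1)+1) (-2*u*z) * Complex.exp (u*z) := by
    rw [hC3]
    exact tsum_congr fun n => (hTconv n).symm
  have hSt2 : Summable (fun n : ℕ => Stmt13.tco m (2*(p:ℂ)+1) u (n+1) * z^n) := by
    refine (hSt1.mul_left ((2*(p:ℂ)+1))⁻¹).congr fun n => ?_
    field_simp
  have hTsum2 : ∑' n : ℕ, Stmt13.tco m (2*(p:ℂ)+1) u (n+1) * z^n
      = ((2*(p:ℂ)+1))⁻¹ * (kummerM (m+1) ((2*(p:ℂ)+1)+1) (-2*u*z) * Complex.exp (u*z)) := by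
    rw [← hTsum1, ← tsum_mul_left]
    exact tsum_congr fun n => by field_simp
  have hfun : (fun n : ℕ => Stmt13.tco m (2*(p:ℂ)+1) u (n+1) * z^(n+1))
      = fun n : ℕ => z * (Stmt13.tco m (2*(p:ℂ)+1) u (n+1) * z^n) := by
    funext n; ring
  have hSt3 : Summable (fun n : ℕ => Stmt13.tco m (2*(p:ℂ)+1) u (n+1) * z^(n+1)) := by
    rw [hfun]; exact hSt2.mul_left z
  have hSt : Summable (fun n : ℕ => Stmt13.tco m (2*(p:ℂ)+1) u n * z^n) :=
    (summable_nat_add_iff 1).1 hSt3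
  have hTsum : ∑' n : ℕ, Stmt13.tco m (2*(p:ℂ)+1) u n * z^n
      = z * (((2*(p:ℂ)+1))⁻¹
          * (kummerM (m+1) ((2*(p:ℂ)+1)+1) (-2*u*z) * Complex.exp (u*z))) := by
    rw [Summable.tsum_eq_zero_add hSt]
    have h0 : Stmt13.tco m (2*(p:ℂ)+1) u 0 * z^0 = 0 := by
      norm_num [Stmt13.tco]
    rw [h0, zero_add]
    calc ∑' n : ℕ, Stmt13.tco m (2*(p:ℂ)+1) u (n+1) * z^(n+1)
        = ∑' n : ℕ, z * (Stmt13.tco m (2*(p:ℂ)+1) u (n+1) * z^n) := by rw [hfun]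
      _ = z * ∑' n : ℕ, Stmt13.tco m (2*(p:ℂ)+1) u (n+1) * z^n := tsum_mul_left
      _ = _ := by rw [hTsum2]
  -- the s-series
  have hSconv := Stmt13.conv_s (m := m) (u := u) hbC z
  have hSs : Summable (fun n : ℕ => Stmt13.sco m (2*(p:ℂ)+1) u n * z^n) :=
    ((hS1.mul_left (1/2 : ℂ)).add (hS2.mul_left (1/2 : ℂ))).congr hSconv
  have hSsum : ∑' n : ℕ, Stmt13.sco m (2*(p:ℂ)+1) u n * z^n
      = (1/2 : ℂ) * (kummerM m (2*(p:ℂ)+1) (-2*u*z) * Complex.exp (u*z))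
        + (1/2 : ℂ) * (kummerM (m+1) (2*(p:ℂ)+1) (-2*u*z) * Complex.exp (u*z)) := by
    rw [hC1, hC2, ← tsum_mul_left, ← tsum_mul_left,
      ← Summable.tsum_add (hS1.mul_left (1/2 : ℂ)) (hS2.mul_left (1/2 : ℂ))]
    exact tsum_congr fun n => (hSconv n).symm
  constructor
  · -- A
    have hAz : A z = ∑' n : ℕ, ((Stmt13.sco m (2*(p:ℂ)+1) u n * z^n)
        - κ3 * (Stmt13.tco m (2*(p:ℂ)+1) u n * z^n)) := by
      rw [← (hA z).tsum_eq]
      exact tsum_congr fun n => by rw [(key n).1]; ring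
    rw [hAz, Summable.tsum_sub hSs (hSt.mul_left (κ3:ℂ)), tsum_mul_left, hSsum, hTsum]
    field_simp
  · -- B
    have hBz : B z = ∑' n : ℕ, (κ1:ℂ) * (Stmt13.tco m (2*(p:ℂ)+1) u n * z^n) := by
      rw [← (hB z).tsum_eq]
      exact tsum_congr fun n => by rw [(key n).2]; ring
    rw [hBz, tsum_mul_left, hTsum]
    field_simp
end
end

section
/- Let p ∈ ℝ with p ∉ {−(k+1)/2 : k ∈ ℕ₀}, let P = [[κ₁,κ₃],[κ₃,κ₂]] be a real symmetric 2×2 matrix with det P = 0, and let ψ ∈ ℝ. Set σ := 2p·κ₃ − ψ·κ₁, and let (A,B) = Ξₚ(P,ψ). Then for all z ∈ ℂ: A(z) = ₀F₁(2p+1, −σz) − (κ₃/(2p+1))·z·₀F₁(2p+2, −σz) and B(z) = (κ₁/(2p+1))·z·₀F₁(2p+2, −σz). -/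
open Matrix MeasureTheory Filter

noncomputable section

lemma risingFac_ne_zero {b : ℂ} (hb : ∀ k : ℕ, b + (k : ℂ) ≠ 0) : ∀ n, risingFac b n ≠ 0
  | 0 => one_ne_zero
  | n + 1 => mul_ne_zero (risingFac_ne_zero hb n) (hb n)

lemma summable_hyp {b : ℂ} (hb : ∀ k : ℕ, b + (k : ℂ) ≠ 0) (w : ℂ) :
    Summable (fun n : ℕ => (1 / risingFac b n) * w ^ n / (n.factorial : ℂ)) := by
  set f : ℕ → ℂ := fun n => (1 / risingFac b n) * w ^ n / (n.factorial : ℂ) with hf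
  have key : ∀ n : ℕ, f (n + 1) = f n * (w / ((b + n) * ((n : ℂ) + 1))) := by
    intro n
    have h1 : risingFac b (n + 1) = risingFac b n * (b + n) := rfl
    have h2 : ((n + 1).factorial : ℂ) = (n.factorial : ℂ) * ((n : ℂ) + 1) := by
      push_cast [Nat.factorial_succ]; ring
    simp only [hf, h1, h2, pow_succ]
    field_simp
  apply summable_of_ratio_norm_eventually_le (r := 1/2) (by norm_num)
  have : ∀ᶠ n : ℕ in atTop, ‖w / ((b + n) * ((n : ℂ) + 1))‖ ≤ 1/2 := by
    filter_upwards [eventually_ge_atTop (⌈2 * ‖w‖ + ‖b‖⌉₊ + 1)] with n hn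
    have hn' : 2 * ‖w‖ + ‖b‖ + 1 ≤ (n : ℝ) := by
      have := Nat.le_of_ceil_le (le_of_lt (Nat.lt_of_lt_of_le (Nat.lt_succ_self _) hn))
      calc 2 * ‖w‖ + ‖b‖ + 1 ≤ (⌈2 * ‖w‖ + ‖b‖⌉₊ : ℝ) + 1 := by
            linarith [Nat.le_ceil (2 * ‖w‖ + ‖b‖)]
        _ ≤ (n : ℝ) := by exact_mod_cast hn
    have hbn : 2 * ‖w‖ ≤ ‖b + (n : ℂ)‖ := by
      have h3 : ‖((n : ℕ) : ℂ)‖ ≤ ‖b + (n : ℂ)‖ + ‖b‖ := by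
        simpa using norm_sub_le (b + (n : ℂ)) b
      rw [Complex.norm_natCast] at h3
      linarith
    have h1 : (1 : ℝ) ≤ ‖((n : ℂ) + 1)‖ := by
      have : ((n : ℂ) + 1) = ((n + 1 : ℕ) : ℂ) := by push_cast; ring
      rw [this, Complex.norm_natCast]
      exact_mod_cast Nat.succ_le_succ (Nat.zero_le n)
    rw [norm_div, norm_mul]
    rcases eq_or_ne w 0 with h | h
    · simp [h]
    · have hw : 0 < ‖w‖ := norm_pos_iff.mpr h
      rw [div_le_iff₀ (by nlinarith)]
      nlinarith
  filter_upwards [this] with n hn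
  rw [key n, norm_mul]
  calc ‖f n‖ * ‖w / ((b + n) * ((n : ℂ) + 1))‖ ≤ ‖f n‖ * (1/2) :=
        mul_le_mul_of_nonneg_left hn (norm_nonneg _)
    _ = 1/2 * ‖f n‖ := by ring

def eSeq (p σ : ℝ) : ℕ → ℝ
  | 0 => 1
  | n + 1 => eSeq p σ n * (-σ) / ((2 * p + 1 + n) * (n + 1))

lemma eSeq_cast (p σ : ℝ) (h : ∀ n : ℕ, 2 * p + 1 + (n : ℝ) ≠ 0) (n : ℕ) :
    ((eSeq p σ n : ℝ) : ℂ) = (-(σ:ℂ)) ^ n / (risingFac (2 * (p:ℂ) + 1) n * (n.factorial : ℂ)) := by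
  have hb : ∀ k : ℕ, 2 * (p:ℂ) + 1 + (k : ℂ) ≠ 0 := by
    intro k hk
    apply h k
    have : ((2 * p + 1 + (k:ℝ) : ℝ) : ℂ) = 0 := by push_cast; linear_combination hk
    exact_mod_cast this
  induction n with
  | zero => simp [eSeq, risingFac]
  | succ n ih =>
    have hr := risingFac_ne_zero hb n
    have h1 : risingFac (2 * (p:ℂ) + 1) (n + 1) = risingFac (2 * (p:ℂ) + 1) n * (2 * (p:ℂ) + 1 + n) := rfl
    have h2 : ((n + 1).factorial : ℂ) = (n.factorial : ℂ) * ((n : ℂ) + 1) := by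
      push_cast [Nat.factorial_succ]; ring
    have hfc : (n.factorial : ℂ) ≠ 0 := Nat.cast_ne_zero.mpr n.factorial_ne_zero
    have hn1 : ((n : ℂ) + 1) ≠ 0 := Nat.cast_add_one_ne_zero n
    have hd : (2 * p + 1 + (n:ℝ)) ≠ 0 := h n
    rw [show eSeq p σ (n+1) = eSeq p σ n * (-σ) / ((2 * p + 1 + n) * (n + 1)) from rfl]
    push_cast
    rw [ih, h1, h2, pow_succ]
    have hdc : (2 * (p:ℂ) + 1 + n) ≠ 0 := hb n
    field_simp

lemma hasSum_eSeq (p σ : ℝ) (h : ∀ n : ℕ, 2 * p + 1 + (n : ℝ) ≠ 0) (z : ℂ) :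
    HasSum (fun n : ℕ => ((eSeq p σ n : ℝ) : ℂ) * z ^ n)
      (hyp0F1 (2 * (p:ℂ) + 1) (-(σ:ℂ) * z)) := by
  have hb : ∀ k : ℕ, 2 * (p:ℂ) + 1 + (k : ℂ) ≠ 0 := by
    intro k hk
    apply h k
    have : ((2 * p + 1 + (k:ℝ) : ℝ) : ℂ) = 0 := by push_cast; linear_combination hk
    exact_mod_cast this
  have hs := (summable_hyp hb (-(σ:ℂ) * z)).hasSum
  rw [show (∑' n : ℕ, (1 / risingFac (2 * (p:ℂ) + 1) n) * (-(σ:ℂ) * z) ^ n / (n.factorial : ℂ))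
      = hyp0F1 (2 * (p:ℂ) + 1) (-(σ:ℂ) * z) from rfl] at hs
  refine hs.congr_fun fun n => ?_
  rw [eSeq_cast p σ h n, mul_pow]
  ring

lemma eSeq_shift (p σ : ℝ) (h : ∀ n : ℕ, 2 * p + 1 + (n : ℝ) ≠ 0) (n : ℕ) :
    eSeq (p + 1/2) σ n * (2 * p + 1 + n) = eSeq p σ n * (2 * p + 1) := by
  induction n with
  | zero => simp [eSeq]
  | succ n ih =>
    have hdn : (2 * p + 1 + (n:ℝ)) ≠ 0 := h n
    have hdn1 : (2 * p + 1 + ((n:ℝ) + 1)) ≠ 0 := by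
      have := h (n + 1); push_cast at this; exact this
    have hn1 : ((n:ℝ) + 1) ≠ 0 := by positivity
    have e1 : eSeq (p + 1/2) σ (n+1) = eSeq (p + 1/2) σ n * (-σ) / ((2 * (p + 1/2) + 1 + n) * (n + 1)) := rfl
    have e2 : eSeq p σ (n+1) = eSeq p σ n * (-σ) / ((2 * p + 1 + n) * (n + 1)) := rfl
    have h2 : (2 * (p + 1/2) + 1 + (n:ℝ)) = 2 * p + 1 + ((n:ℝ) + 1) := by ring
    rw [e1, e2, h2]
    set E := eSeq (p + 1/2) σ n with hE
    set F := eSeq p σ n with hF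
    push_cast
    field_simp
    linear_combination (-σ) * ih


set_option maxHeartbeats 1000000 in
lemma coef_formula (p : ℝ) (hp : ∀ k : ℕ, p ≠ -((k : ℝ) + 1) / 2)
    (κ1 κ2 κ3 ψ : ℝ)
    (hdet : (!![κ1, κ3; κ3, κ2] : Matrix (Fin 2) (Fin 2) ℝ).det = 0)
    (σ : ℝ) (hσ : σ = 2 * p * κ3 - ψ * κ1)
    (al bt : ℕ → ℝ) (hrec : SatRec p !![κ1, κ3; κ3, κ2] ψ al bt) :
    ∀ n : ℕ, al n = eSeq p σ n - κ3 / (2 * p + 1) * (Nat.casesOn n 0 (fun m => eSeq (p + 1/2) σ m)) ∧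
      bt n = κ1 / (2 * p + 1) * (Nat.casesOn n 0 (fun m => eSeq (p + 1/2) σ m)) := by
  have hz1 : ∀ n : ℕ, 2 * p + 1 + (n : ℝ) ≠ 0 := by
    intro n h
    exact hp n (by linarith)
  have hdet' : κ1 * κ2 = κ3 * κ3 := by
    have := hdet
    simp [Matrix.det_fin_two_of] at this
    linarith
  have h2p1 : (2 * p + 1) ≠ 0 := by have := hz1 0; simpa using this
  subst hσ
  intro n
  induction n with
  | zero => simpa [eSeq] using ⟨hrec.1, hrec.2.1⟩
  | succ n ih =>
    obtain ⟨ih1, ih2⟩ := ih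
    have h00 := congrFun (congrFun (hrec.2.2 n) 0) 0
    have h01 := congrFun (congrFun (hrec.2.2 n) 0) 1
    simp [Matrix.mul_apply, Fin.sum_univ_two, matJ, Matrix.smul_apply] at h00 h01
    have hdn : (2 * p + 1 + (n:ℝ)) ≠ 0 := hz1 n
    have hdn' : (2 * p + (n:ℝ) + 1) ≠ 0 := by intro h; exact hdn (by linarith)
    have hn1 : ((n:ℝ) + 1) ≠ 0 := by positivity
    set E := eSeq p (2 * p * κ3 - ψ * κ1) n with hEdef
    set D := (Nat.casesOn n 0 fun m => eSeq (p + 1/2) (2 * p * κ3 - ψ * κ1) m : ℝ) with hDdef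
    have hes : eSeq p (2 * p * κ3 - ψ * κ1) (n+1)
        = E * (-(2 * p * κ3 - ψ * κ1)) / ((2 * p + 1 + n) * (n + 1)) := rfl
    have hdd : eSeq (p + 1/2) (2 * p * κ3 - ψ * κ1) n
        = E * (2 * p + 1) / (2 * p + 1 + n) := by
      have h5 := eSeq_shift p (2 * p * κ3 - ψ * κ1) hz1 n
      rw [← hEdef] at h5
      rw [eq_div_iff hdn]
      linear_combination h5
    clear_value E D
    have combo1 : κ1 * al n + κ3 * bt n = κ1 * E := by
      rw [ih1, ih2]; field_simp; ring
    have combo2 : κ3 * al n + κ2 * bt n = κ3 * E := by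
      rw [ih1, ih2]; field_simp; linear_combination D * hdet'
    constructor
    · show al (n+1) = _ - κ3 / (2 * p + 1) * eSeq (p + 1/2) (2 * p * κ3 - ψ * κ1) n
      have hsum : al n * (κ3 * (2 * p + (n:ℝ) + 1) + -(κ1 * ψ)) + bt n * (κ2 * (2 * p + (n:ℝ) + 1) + -(κ3 * ψ))
          = (2 * p + (n:ℝ) + 1) * (κ3 * E) - ψ * (κ1 * E) := by
        linear_combination (2 * p + (n:ℝ) + 1) * combo2 - ψ * combo1
      rw [h00, hsum, hes, hdd]
      field_simp
      ring
    · show bt (n+1) = κ1 / (2 * p + 1) * eSeq (p + 1/2) (2 * p * κ3 - ψ * κ1) n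
      have hsum2 : -(al n * (κ1 * ((n:ℝ) + 1))) + -(bt n * (κ3 * ((n:ℝ) + 1)))
          = -(((n:ℝ) + 1)) * (κ1 * E) := by
        linear_combination (-((n:ℝ) + 1)) * combo1
      rw [h01, hsum2, hdd]
      field_simp
      ring

set_option maxHeartbeats 1000000

/-- explicit formulae for (A,B) = Ξₚ(P,ψ) in terms of ₀F₁ when
det P = 0. -/
theorem statement14 (p : ℝ) (hp : ∀ k : ℕ, p ≠ -((k : ℝ) + 1) / 2)
    (κ1 κ2 κ3 ψ : ℝ)
    (hdet : (!![κ1, κ3; κ3, κ2] : Matrix (Fin 2) (Fin 2) ℝ).det = 0)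
    (σ : ℝ) (hσ : σ = 2 * p * κ3 - ψ * κ1)
    (al bt : ℕ → ℝ) (hrec : SatRec p !![κ1, κ3; κ3, κ2] ψ al bt)
    (A B : ℂ → ℂ)
    (hA : ∀ z : ℂ, HasSum (fun n : ℕ => (al n : ℂ) * z ^ n) (A z))
    (hB : ∀ z : ℂ, HasSum (fun n : ℕ => (bt n : ℂ) * z ^ n) (B z)) :
    ∀ z : ℂ,
      A z = hyp0F1 (2 * (p : ℂ) + 1) (-(σ : ℂ) * z)
          - (κ3 : ℂ) / (2 * (p : ℂ) + 1) * z * hyp0F1 (2 * (p : ℂ) + 2) (-(σ : ℂ) * z) ∧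
      B z = (κ1 : ℂ) / (2 * (p : ℂ) + 1) * z * hyp0F1 (2 * (p : ℂ) + 2) (-(σ : ℂ) * z) := by
  have hz1 : ∀ n : ℕ, 2 * p + 1 + (n : ℝ) ≠ 0 := by
    intro n h
    exact hp n (by linarith)
  have hz2 : ∀ n : ℕ, 2 * (p + 1/2) + 1 + (n : ℝ) ≠ 0 := by
    intro n h
    have := hz1 (n + 1)
    push_cast at this
    exact this (by linarith)
  have h2p1 : (2 * (p:ℂ) + 1) ≠ 0 := by
    intro h
    have := hz1 0
    apply this
    have : ((2 * p + 1 + (0:ℝ) : ℝ) : ℂ) = 0 := by push_cast; linear_combination h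
    exact_mod_cast this
  have key := coef_formula p hp κ1 κ2 κ3 ψ hdet σ hσ al bt hrec
  intro z
  have hs1 := hasSum_eSeq p σ hz1 z
  have hs2 := hasSum_eSeq (p + 1/2) σ hz2 z
  rw [show (2 * (((p + 1/2 : ℝ)):ℂ) + 1) = 2 * (p:ℂ) + 2 by push_cast; ring] at hs2
  set S2 := hyp0F1 (2 * (p:ℂ) + 2) (-(σ:ℂ) * z) with hS2
  set S1 := hyp0F1 (2 * (p:ℂ) + 1) (-(σ:ℂ) * z) with hS1
  set g : ℕ → ℂ := fun n => ((Nat.casesOn n 0 (fun m => eSeq (p + 1/2) σ m) : ℝ) : ℂ) * z ^ n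
    with hg
  have hs3 : HasSum g (z * S2) := by
    have h9 : HasSum (fun n : ℕ => g (n + 1)) (z * S2) := by
      refine (hs2.mul_left z).congr_fun fun n => ?_
      show ((eSeq (p + 1/2) σ n : ℝ) : ℂ) * z ^ (n + 1) = z * (((eSeq (p + 1/2) σ n : ℝ) : ℂ) * z ^ n)
      ring
    have h10 := (hasSum_nat_add_iff (f := g) 1).mp h9
    simpa [hg] using h10
  constructor
  · have hAz : HasSum (fun n : ℕ => (al n : ℂ) * z ^ n)
        (S1 - (κ3:ℂ) / (2 * (p:ℂ) + 1) * (z * S2)) := by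
      refine (hs1.sub (hs3.mul_left ((κ3:ℂ) / (2 * (p:ℂ) + 1)))).congr_fun fun n => ?_
      have hk := (key n).1
      have : ((al n : ℝ) : ℂ) = ((eSeq p σ n : ℝ) : ℂ)
          - (κ3:ℂ) / (2 * (p:ℂ) + 1) * ((Nat.casesOn n 0 (fun m => eSeq (p + 1/2) σ m) : ℝ) : ℂ) := by
        rw [hk]
        push_cast
        ring
      rw [this, hg]
      ring
    rw [(hA z).unique hAz]
    ring
  · have hBz : HasSum (fun n : ℕ => (bt n : ℂ) * z ^ n)
        ((κ1:ℂ) / (2 * (p:ℂ) + 1) * (z * S2)) := by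
      refine (hs3.mul_left ((κ1:ℂ) / (2 * (p:ℂ) + 1))).congr_fun fun n => ?_
      have hk := (key n).2
      have : ((bt n : ℝ) : ℂ) = (κ1:ℂ) / (2 * (p:ℂ) + 1)
          * ((Nat.casesOn n 0 (fun m => eSeq (p + 1/2) σ m) : ℝ) : ℂ) := by
        rw [hk]
        push_cast
        ring
      rw [this, hg]
      ring
    rw [(hB z).unique hBz]
    ring
end
end

section
/- Let p > −1/2 and let (P,ψ), (P̃,ψ̃) ∈ 𝒫ₚ with P = [[κ₁,κ₃],[κ₃,κ₂]] and P̃ = [[κ̃₁,κ̃₃],[κ̃₃,κ̃₂]]. Then there exists γ ∈ ℝ such that 𝒟_{ψ̃}(a)·P̃·𝒟_{ψ̃}(a)ᵀ = [[1,0],[γ,1]]·𝒟_ψ(a)·P·𝒟_ψ(a)ᵀ·[[1,γ],[0,1]] for all a ∈ (0,1), if and only if the following three conditions hold: κ₁ = κ̃₁, det P = det P̃, and ψ − ψ̃ = (2p/κ₁)·(κ₃ − κ̃₃). -/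
open Matrix MeasureTheory Filter

noncomputable section

/-- The parameter class 𝒫ₚ. -/
def PClass (p : ℝ) (P : Matrix (Fin 2) (Fin 2) ℝ) (ψ : ℝ) : Prop :=
  P.PosSemidef ∧
    ((p ≠ 0 ∧ P.mulVec ![1, 0] ≠ 0 ∧ P.mulVec ![-ψ, 2 * p] ≠ 0) ∨
     (p = 0 ∧ ((LinearMap.ker P.mulVecLin = ⊥ ∧ ψ = 0) ∨
               (P.mulVec ![1, 0] ≠ 0 ∧ ψ ≠ 0))))

def Tfun (p q a : ℝ) : ℝ := if p = 0 then q * Real.log a else q / (2*p) * (a ^ p - a ^ (-p))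

lemma lower_form (p ψ a : ℝ) :
    Dpsi p ψ a = !![a ^ p, 0; Tfun p ψ a, a ^ (-p)] := by
  unfold Dpsi Tfun
  split_ifs with h
  · subst h; norm_num
  · rw [Matrix.mul_fin_two, Matrix.mul_fin_two]
    ext i j
    fin_cases i <;> fin_cases j <;> simp <;> ring

lemma hform (p q k1 k2 k3 a : ℝ) (ha : 0 < a) :
    HPpsi p q !![k1, k3; k3, k2] a =
      !![k1 * (a ^ p) ^ 2, k1 * (a ^ p) * Tfun p q a + k3;
         k1 * (a ^ p) * Tfun p q a + k3,
         k1 * (Tfun p q a) ^ 2 + 2 * k3 * (a ^ p)⁻¹ * Tfun p q a + k2 * ((a ^ p)⁻¹) ^ 2] := by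
  have hs : (a : ℝ) ^ p ≠ 0 := (Real.rpow_pos_of_pos ha p).ne'
  have hneg : a ^ (-p) = (a ^ p)⁻¹ := Real.rpow_neg ha.le p
  unfold HPpsi
  rw [lower_form, hneg]
  have htr : (!![a ^ p, 0; Tfun p q a, (a ^ p)⁻¹] : Matrix (Fin 2) (Fin 2) ℝ)ᵀ
      = !![a ^ p, Tfun p q a; 0, (a ^ p)⁻¹] := by
    ext i j; fin_cases i <;> fin_cases j <;> rfl
  rw [htr]
  have hs1 : a ^ p * (a ^ p)⁻¹ = 1 := mul_inv_cancel₀ hs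
  ext i j
  fin_cases i <;> fin_cases j
  all_goals simp [Matrix.mul_apply, Fin.sum_univ_two]
  all_goals try ring
  all_goals linear_combination (k3 : ℝ) * hs1

lemma det_Dpsi (p ψ a : ℝ) (ha : 0 < a) : (Dpsi p ψ a).det = 1 := by
  rw [lower_form, Matrix.det_fin_two_of, Real.rpow_neg ha.le]
  field_simp [(Real.rpow_pos_of_pos ha p).ne']
  ring

lemma kappa1_pos (p κ1 κ2 κ3 ψ : ℝ) (h : PClass p !![κ1, κ3; κ3, κ2] ψ) : 0 < κ1 := by
  obtain ⟨hpsd, hcond⟩ := h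
  have hmv : (!![κ1, κ3; κ3, κ2]).mulVec ![1, 0] = ![κ1, κ3] := by
    ext i; fin_cases i <;> simp [Matrix.mulVec, dotProduct, Fin.sum_univ_two]
  have hne : (!![κ1, κ3; κ3, κ2]).mulVec ![1, 0] ≠ 0 := by
    rcases hcond with ⟨_, h1, _⟩ | ⟨_, ⟨hker, _⟩ | ⟨h1, _⟩⟩
    · exact h1
    · intro hcontr
      have h0 := Matrix.ker_mulVecLin_eq_bot_iff.mp hker ![1, 0] hcontr
      have h1 : (1 : ℝ) = 0 := congrFun h0 0
      norm_num at h1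
    · exact h1
  have hk1 : 0 ≤ κ1 := by
    have hq := hpsd.dotProduct_mulVec_nonneg ![1, 0]
    simpa [dotProduct, Matrix.mulVec, Fin.sum_univ_two] using hq
  rcases hk1.lt_or_eq with h | h
  · exact h
  · exfalso
    have h0 : κ1 = 0 := h.symm
    have hk2 : 0 ≤ κ2 := by
      have hq := hpsd.dotProduct_mulVec_nonneg ![0, 1]
      simpa [dotProduct, Matrix.mulVec, Fin.sum_univ_two] using hq
    have hk3 : κ3 = 0 := by
      by_contra h3
      have hq := hpsd.dotProduct_mulVec_nonneg ![-(κ2 + 1), κ3]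
      simp [dotProduct, Matrix.mulVec, Fin.sum_univ_two, h0] at hq
      have h32 : 0 < κ3 ^ 2 := by positivity
      nlinarith [hq, h32, hk2]
    apply hne
    rw [hmv, h0, hk3]
    ext i; fin_cases i <;> rfl

/-- two parameters in 𝒫ₚ give Hamiltonians conjugate by a lower
triangular matrix [[1,0],[γ,1]] on (0,1) iff the three stated conditions hold. -/
theorem statement17 (p : ℝ) (hp : -(1/2 : ℝ) < p)
    (κ1 κ2 κ3 ψ κ1t κ2t κ3t ψt : ℝ)
    (hP : PClass p !![κ1, κ3; κ3, κ2] ψ)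
    (hPt : PClass p !![κ1t, κ3t; κ3t, κ2t] ψt) :
    (∃ γ : ℝ, ∀ a : ℝ, 0 < a → a < 1 →
        HPpsi p ψt !![κ1t, κ3t; κ3t, κ2t] a =
          !![1, 0; γ, 1] * HPpsi p ψ !![κ1, κ3; κ3, κ2] a * !![1, γ; 0, 1]) ↔
      (κ1 = κ1t ∧
        (!![κ1, κ3; κ3, κ2] : Matrix (Fin 2) (Fin 2) ℝ).det =
          (!![κ1t, κ3t; κ3t, κ2t] : Matrix (Fin 2) (Fin 2) ℝ).det ∧
        ψ - ψt = 2 * p / κ1 * (κ3 - κ3t)) := by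
  have hk1 : 0 < κ1 := kappa1_pos p κ1 κ2 κ3 ψ hP
  constructor
  · rintro ⟨γ, hγ⟩
    have h2 : (0:ℝ) < 1/2 := by norm_num
    have h4 : (0:ℝ) < 1/4 := by norm_num
    have E1 := hγ (1/2) h2 (by norm_num)
    have E2 := hγ (1/4) h4 (by norm_num)
    rw [hform p ψt κ1t κ2t κ3t _ h2, hform p ψ κ1 κ2 κ3 _ h2] at E1
    rw [hform p ψt κ1t κ2t κ3t _ h4, hform p ψ κ1 κ2 κ3 _ h4] at E2
    have e00 := congrFun (congrFun E1 0) 0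
    have e01 := congrFun (congrFun E1 0) 1
    have e02 := congrFun (congrFun E2 0) 1
    simp [Matrix.mul_apply, Fin.sum_univ_two] at e00 e01 e02
    have hs_pos : 0 < (1/2:ℝ) ^ p := Real.rpow_pos_of_pos h2 p
    have hA : κ1 = κ1t := by
      rcases e00 with h | h
      · exact h.symm
      · exact absurd h (Real.rpow_pos_of_pos (by norm_num : (0:ℝ) < 2⁻¹) p).ne'
    -- determinant
    have Edet := congrArg Matrix.det (hγ (1/2) h2 (by norm_num))
    simp only [HPpsi, Matrix.det_mul, Matrix.det_transpose, det_Dpsi p ψt _ h2,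
      det_Dpsi p ψ _ h2, Matrix.det_fin_two_of] at Edet
    rw [← hA] at e01 e02
    refine ⟨hA, ?_, ?_⟩
    · rw [Matrix.det_fin_two_of, Matrix.det_fin_two_of]
      linear_combination -Edet
    · rcases eq_or_ne p 0 with hp0 | hp0
      · subst hp0
        norm_num [Tfun] at e01 e02
        have hlog : Real.log (1/4:ℝ) = 2 * Real.log (1/2:ℝ) := by
          rw [show (1/4:ℝ) = (1/2:ℝ)^(2:ℕ) by norm_num, Real.log_pow]
          push_cast; ring
        have hlogne : Real.log (1/2:ℝ) ≠ 0 :=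
          ne_of_lt (Real.log_neg (by norm_num) (by norm_num))
        rw [hlog] at e02
        have hz : (ψt - ψ) * (κ1 * Real.log (1/2:ℝ)) = 0 := by linear_combination e02 - e01
        rcases mul_eq_zero.mp hz with h | h
        · norm_num
          linarith
        · exact absurd h (mul_ne_zero hk1.ne' hlogne)
      · set s := (2⁻¹:ℝ) ^ p with hsdef
        have hspos : 0 < s := Real.rpow_pos_of_pos (by norm_num) p
        have hsi : (2⁻¹:ℝ) ^ (-p) = s⁻¹ := by rw [hsdef, Real.rpow_neg (by norm_num : (0:ℝ) ≤ 2⁻¹)]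
        have key2 : ∀ q : ℝ, (4⁻¹:ℝ) ^ q = ((2⁻¹:ℝ) ^ q) ^ 2 := by
          intro q
          rw [show (4⁻¹:ℝ) = (2⁻¹:ℝ) ^ (2:ℕ) by norm_num, ← Real.rpow_natCast (2⁻¹:ℝ) 2,
            ← Real.rpow_mul (by norm_num : (0:ℝ) ≤ 2⁻¹), mul_comm,
            Real.rpow_mul (by norm_num : (0:ℝ) ≤ 2⁻¹), Real.rpow_natCast]
        have hs4 : (4⁻¹:ℝ) ^ p = s ^ 2 := key2 p
        have hs4' : (4⁻¹:ℝ) ^ (-p) = (s ^ 2)⁻¹ := by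
          rw [Real.rpow_neg (by norm_num : (0:ℝ) ≤ 4⁻¹), hs4]
        have hsne1 : s ≠ 1 := by
          rcases hp0.lt_or_gt with h | h
          · exact ne_of_gt ((Real.one_lt_rpow_iff_of_pos (by norm_num)).2
              (Or.inr ⟨by norm_num, h⟩))
          · exact ne_of_lt (Real.rpow_lt_one (by norm_num) (by norm_num) h)
        simp only [Tfun, if_neg hp0, hsi, hs4, hs4'] at e01 e02
        field_simp [hp0] at e01 e02
        rw [show ((1:ℝ)/2) ^ p = s by rw [one_div]] at e01
        have key : (2*p*(κ3t-κ3) - κ1*(ψt-ψ)) * (s^5 - s^3) = 0 := by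
          linear_combination s^5 * e01 - s^3 * e02
        clear E1 E2 hγ hP hPt
        have hs2ne : s^2 ≠ 1 := by
          intro h
          have hfac2 : (s - 1) * (s + 1) = 0 := by linear_combination h
          rcases mul_eq_zero.mp hfac2 with h' | h'
          · exact hsne1 (by linarith)
          · linarith
        have hfac : s^5 - s^3 ≠ 0 := by
          have : s^5 - s^3 = s^3 * (s^2 - 1) := by ring
          rw [this]
          exact mul_ne_zero (pow_ne_zero _ hspos.ne') (sub_ne_zero.mpr hs2ne)
        have h0 : 2*p*(κ3t-κ3) - κ1*(ψt-ψ) = 0 := by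
          rcases mul_eq_zero.mp key with h | h
          · exact h
          · exact absurd h hfac
        field_simp
        linear_combination h0
  · rintro ⟨h1, hdet, hψ⟩
    refine ⟨(κ3t - κ3)/κ1, fun a ha ha1 => ?_⟩
    rw [hform p ψt κ1t κ2t κ3t a ha, hform p ψ κ1 κ2 κ3 a ha]
    have hs : 0 < a ^ p := Real.rpow_pos_of_pos ha p
    have hs1 : a ^ p * (a ^ p)⁻¹ = 1 := mul_inv_cancel₀ hs.ne'
    set γ := (κ3t - κ3)/κ1 with hγdef
    have e1 : κ1t = κ1 := h1.symm
    have e3 : κ3t = κ3 + γ * κ1 := by rw [hγdef]; field_simp; ring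
    have hdet' : κ1*κ2 - κ3*κ3 = κ1t*κ2t - κ3t*κ3t := by
      simpa [Matrix.det_fin_two_of] using hdet
    have e2 : κ2t = κ2 + γ * (2*κ3 + γ*κ1) := by
      have h' : κ1 * κ2t = κ1 * (κ2 + γ * (2*κ3 + γ*κ1)) := by
        rw [e1] at hdet'
        linear_combination (κ3t + κ3 + γ*κ1) * e3 - hdet'
      exact mul_left_cancel₀ hk1.ne' h'
    have eT : Tfun p ψt a = Tfun p ψ a + γ * (a ^ p - (a ^ p)⁻¹) := by
      unfold Tfun
      split_ifs with h0
      · have hpp : ψ = ψt := by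
          have := hψ
          rw [h0] at this
          simp at this
          linarith
        simp [h0, Real.rpow_zero, hpp]
      · have hψt : ψt = ψ + 2*p*γ := by
          rw [hγdef]
          field_simp at hψ ⊢
          linarith [hψ]
        rw [hψt, Real.rpow_neg ha.le]
        field_simp
    rw [e1, e2, e3, eT]
    ext i j
    fin_cases i <;> fin_cases j
    all_goals simp [Matrix.mul_apply, Fin.sum_univ_two]
    all_goals try ring
    all_goals try linear_combination (-(γ*κ1)) * hs1
    all_goals linear_combination (2*γ*κ3) * hs1
end
end

section
/- Let p > −1/2 and define the equivalence relation ≈ on 𝒫ₚ by: (P,ψ) ≈ (P̃,ψ̃) iff κ₁ = κ̃₁, det P = det P̃, and ψ − ψ̃ = (2p/κ₁)·(κ₃ − κ̃₃), where P = [[κ₁,κ₃],[κ₃,κ₂]] and P̃ = [[κ̃₁,κ̃₃],[κ̃₃,κ̃₂]]. Then: (i) the set {(P,ψ) ∈ 𝒫ₚ : κ₃ = 0} is a complete system of representatives of 𝒫ₚ modulo ≈, i.e. every (P,ψ) ∈ 𝒫ₚ is ≈-equivalent to exactly one element of this set; (ii) if p ≠ 0, the set {(P,ψ) ∈ 𝒫ₚ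 : ψ = 0} is likewise a complete system of representatives of 𝒫ₚ modulo ≈. -/
open Matrix MeasureTheory Filter

noncomputable section

/-- The equivalence relation ≈ on 𝒫ₚ (equality of homogeneous spaces). -/
def approxRel (p : ℝ) (Pψ Qφ : Matrix (Fin 2) (Fin 2) ℝ × ℝ) : Prop :=
  Pψ.1 0 0 = Qφ.1 0 0 ∧ Pψ.1.det = Qφ.1.det ∧
    Pψ.2 - Qφ.2 = 2 * p / Pψ.1 0 0 * (Pψ.1 0 1 - Qφ.1 0 1)

namespace St18

lemma herm10 {P : Matrix (Fin 2) (Fin 2) ℝ} (h : P.IsHermitian) : P 1 0 = P 0 1 := by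
  have := h.apply 0 1
  simpa using this

lemma mulVec_pair (P : Matrix (Fin 2) (Fin 2) ℝ) (x y : ℝ) :
    P.mulVec ![x, y] = ![P 0 0 * x + P 0 1 * y, P 1 0 * x + P 1 1 * y] := by
  funext i
  fin_cases i <;> simp [Matrix.mulVec, dotProduct, Fin.sum_univ_two]

lemma vec_ne_zero {v : Fin 2 → ℝ} (i : Fin 2) (h : v i ≠ 0) : v ≠ 0 :=
  fun hv => h (by rw [hv]; rfl)

lemma vec_eq_zero {x y : ℝ} (h0 : x = 0) (h1 : y = 0) : (![x, y] : Fin 2 → ℝ) = 0 := by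
  funext i; fin_cases i <;> simp [h0, h1]

lemma quad {P : Matrix (Fin 2) (Fin 2) ℝ} (h : P.PosSemidef) (x y : ℝ) :
    0 ≤ P 0 0 * x * x + 2 * P 0 1 * x * y + P 1 1 * y * y := by
  have h2 := h.dotProduct_mulVec_nonneg ![x, y]
  have h10 := herm10 h.1
  simp [dotProduct, Matrix.mulVec, Fin.sum_univ_two] at h2
  have he : P 0 0 * x * x + 2 * P 0 1 * x * y + P 1 1 * y * y =
      x * (P 0 0 * x + P 0 1 * y) + y * (P 1 0 * x + P 1 1 * y) := by rw [h10]; ring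
  rw [he]; exact h2

lemma b_eq_zero {P : Matrix (Fin 2) (Fin 2) ℝ} (h : P.PosSemidef) (ha : P 0 0 = 0) :
    P 0 1 = 0 := by
  by_contra hb
  have hc : 0 ≤ P 1 1 := by have := quad h 0 1; nlinarith
  have := quad h (-(P 1 1 + 1) / (2 * P 0 1)) 1
  rw [ha] at this
  field_simp at this
  rw [le_div_iff₀ (lt_of_le_of_ne (sq_nonneg _) (Ne.symm (pow_ne_zero 2 hb)))] at this
  nlinarith [sq_nonneg (P 0 1), lt_of_le_of_ne (sq_nonneg (P 0 1)) (Ne.symm (pow_ne_zero 2 hb))]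

lemma psd_of (a b c : ℝ) (ha : 0 < a) (hd : 0 ≤ a * c - b * b) :
    (!![a, b; b, c]).PosSemidef := by
  refine Matrix.PosSemidef.of_dotProduct_mulVec_nonneg ?_ ?_
  · ext i j
    fin_cases i <;> fin_cases j <;> simp [Matrix.conjTranspose_apply]
  · intro x
    have hx : dotProduct (star x) ((!![a, b; b, c]) *ᵥ x) =
        a * x 0 * x 0 + b * x 0 * x 1 + b * x 1 * x 0 + c * x 1 * x 1 := by
      simp [dotProduct, Matrix.mulVec, Fin.sum_univ_two]; ring
    rw [hx]
    nlinarith [sq_nonneg (a * x 0 + b * x 1), mul_nonneg hd (sq_nonneg (x 1)), ha.le]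

/-- κ₁ > 0 for members of the class. -/
lemma kappa1_pos {p : ℝ} {P : Matrix (Fin 2) (Fin 2) ℝ} {ψ : ℝ}
    (hPSD : P.PosSemidef)
    (hcase : (p ≠ 0 ∧ P.mulVec ![1, 0] ≠ 0 ∧ P.mulVec ![-ψ, 2 * p] ≠ 0) ∨
     (p = 0 ∧ ((LinearMap.ker P.mulVecLin = ⊥ ∧ ψ = 0) ∨
               (P.mulVec ![1, 0] ≠ 0 ∧ ψ ≠ 0)))) : 0 < P 0 0 := by
  have h10 := herm10 hPSD.1
  have hnn : 0 ≤ P 0 0 := by have := quad hPSD 1 0; nlinarith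
  rcases hnn.lt_or_eq with h | h
  · exact h
  · exfalso
    have hb := b_eq_zero hPSD h.symm
    have hmv : P.mulVec ![1, 0] = 0 := by
      rw [mulVec_pair]
      exact vec_eq_zero (by rw [← h]; ring) (by rw [h10, hb]; ring)
    rcases hcase with ⟨_, h1, _⟩ | ⟨_, ⟨hk, _⟩ | ⟨h1, _⟩⟩
    · exact h1 hmv
    · have := LinearMap.ker_eq_bot'.mp hk ![1, 0] (by rw [Matrix.mulVecLin_apply]; exact hmv)
      have h01 : (![1, 0] : Fin 2 → ℝ) 0 = 0 := by rw [this]; rfl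
      simpa using h01
    · exact h1 hmv

lemma det_nonneg2 {P : Matrix (Fin 2) (Fin 2) ℝ} (h : P.PosSemidef) (ha : 0 < P 0 0) :
    0 ≤ P.det := by
  have h10 := herm10 h.1
  have hq := quad h (-(P 0 1)) (P 0 0)
  rw [Matrix.det_fin_two, h10]
  nlinarith

/-- If ψκ₁ = 2pκ₃ and the second nondegeneracy holds (p ≠ 0), then det P ≠ 0. -/
lemma detP_ne {p ψ : ℝ} {P : Matrix (Fin 2) (Fin 2) ℝ} (hp : p ≠ 0)
    (hPSD : P.PosSemidef) (hv2 : P.mulVec ![-ψ, 2 * p] ≠ 0)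
    (ha : P 0 0 ≠ 0) (hψ : ψ * P 0 0 = 2 * p * P 0 1) (hd : P.det = 0) : False := by
  have h10 := herm10 hPSD.1
  rw [Matrix.det_fin_two, h10] at hd
  apply hv2
  rw [mulVec_pair]
  refine vec_eq_zero ?_ ?_
  · have : P 0 0 * (P 0 0 * -ψ + P 0 1 * (2 * p)) = 0 := by linear_combination (-(P 0 0)) * hψ
    exact (mul_eq_zero.mp this).resolve_left ha
  · have : P 0 0 * (P 1 0 * -ψ + P 1 1 * (2 * p)) = 0 := by
      rw [h10]; linear_combination (-(P 0 1)) * hψ + (2 * p) * hd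
    exact (mul_eq_zero.mp this).resolve_left ha

lemma ker_eq_bot_of_det_ne {Q : Matrix (Fin 2) (Fin 2) ℝ} (hd : Q.det ≠ 0) :
    LinearMap.ker Q.mulVecLin = ⊥ := by
  rw [LinearMap.ker_eq_bot']
  intro m hm
  rw [Matrix.mulVecLin_apply] at hm
  have : (Q⁻¹ * Q) *ᵥ m = 0 := by rw [← Matrix.mulVec_mulVec, hm, Matrix.mulVec_zero]
  rwa [Matrix.nonsing_inv_mul _ (isUnit_iff_ne_zero.mpr hd), Matrix.one_mulVec] at this

lemma det_ne_of_ker {Q : Matrix (Fin 2) (Fin 2) ℝ} (hk : LinearMap.ker Q.mulVecLin = ⊥) :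
    Q.det ≠ 0 := by
  intro hd
  obtain ⟨v, hv, hv0⟩ := (Matrix.exists_mulVec_eq_zero_iff).mpr hd
  exact hv (LinearMap.ker_eq_bot'.mp hk v (by rw [Matrix.mulVecLin_apply]; exact hv0))

end St18

/-- complete systems of representatives of 𝒫ₚ modulo ≈. -/





theorem statement18 (p : ℝ) (hp : -(1/2 : ℝ) < p) :
    (∀ P : Matrix (Fin 2) (Fin 2) ℝ, ∀ ψ : ℝ, PClass p P ψ →
      ∃! Qφ : Matrix (Fin 2) (Fin 2) ℝ × ℝ,
        (PClass p Qφ.1 Qφ.2 ∧ Qφ.1 0 1 = 0) ∧ approxRel p (P, ψ) Qφ) ∧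
    (p ≠ 0 →
      ∀ P : Matrix (Fin 2) (Fin 2) ℝ, ∀ ψ : ℝ, PClass p P ψ →
        ∃! Qφ : Matrix (Fin 2) (Fin 2) ℝ × ℝ,
          (PClass p Qφ.1 Qφ.2 ∧ Qφ.2 = 0) ∧ approxRel p (P, ψ) Qφ) := by
  constructor
  · -- Part (i): κ₃ = 0 representatives
    intro P ψ h
    obtain ⟨hPSD, hcase⟩ := h
    have h10 := St18.herm10 hPSD.1
    have ha : 0 < P 0 0 := St18.kappa1_pos hPSD hcase
    have hane : P 0 0 ≠ 0 := ne_of_gt ha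
    have hd0 : 0 ≤ P.det := St18.det_nonneg2 hPSD ha
    have hcd : P 0 0 * (P.det / P 0 0) - 0 * 0 = P.det := by field_simp; ring
    have hdetQ : (!![P 0 0, 0; 0, P.det / P 0 0]).det = P.det := by
      rw [Matrix.det_fin_two_of]; field_simp; ring
    refine ⟨(!![P 0 0, 0; 0, P.det / P 0 0], ψ - 2 * p / P 0 0 * P 0 1),
      ⟨⟨⟨St18.psd_of _ _ _ ha (by rw [hcd]; exact hd0), ?_⟩, by simp⟩, ?_⟩, ?_⟩
    · -- class conditions
      rcases hcase with ⟨hp0, hv1, hv2⟩ | ⟨hp0, ⟨hk, hψ0⟩ | ⟨hv1, hψ0⟩⟩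
      · refine Or.inl ⟨hp0, ?_, ?_⟩
        · rw [St18.mulVec_pair]
          refine St18.vec_ne_zero 0 ?_
          simpa using hane
        · rw [St18.mulVec_pair]
          by_cases hφ : ψ - 2 * p / P 0 0 * P 0 1 = 0
          · have hψ : ψ * P 0 0 = 2 * p * P 0 1 := by
              field_simp at hφ; linarith
            have hdne : P.det ≠ 0 := fun hd => St18.detP_ne hp0 hPSD hv2 hane hψ hd
            refine St18.vec_ne_zero 1 ?_
            simp only [Matrix.cons_val_one, Matrix.head_cons]
            have e : (!![P 0 0, 0; 0, P.det / P 0 0]) 1 0 = 0 := by simp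
            have e2 : (!![P 0 0, 0; 0, P.det / P 0 0]) 1 1 = P.det / P 0 0 := by simp
            rw [e, e2]
            intro hx
            apply hdne
            have h2p : (2 : ℝ) * p ≠ 0 := by
              intro h0; exact hp0 (by linarith [mul_eq_zero.mp h0])
            field_simp at hx
            simpa [hane, hp0] using hx
          · refine St18.vec_ne_zero 0 ?_
            simp only [Matrix.cons_val_zero]
            have e : (!![P 0 0, 0; 0, P.det / P 0 0]) 0 0 = P 0 0 := by simp
            have e2 : (!![P 0 0, 0; 0, P.det / P 0 0]) 0 1 = 0 := by simp
            rw [e, e2]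
            intro hx
            apply hφ
            have : P 0 0 * -(ψ - 2 * p / P 0 0 * P 0 1) = 0 := by linarith
            have := (mul_eq_zero.mp this).resolve_left hane
            linarith
      · subst hp0
        refine Or.inr ⟨rfl, Or.inl ⟨?_, by simp [hψ0]⟩⟩
        have hdne : P.det ≠ 0 := St18.det_ne_of_ker hk
        exact St18.ker_eq_bot_of_det_ne (by rw [hdetQ]; exact hdne)
      · subst hp0
        refine Or.inr ⟨rfl, Or.inr ⟨?_, by simpa using hψ0⟩⟩
        rw [St18.mulVec_pair]
        refine St18.vec_ne_zero 0 ?_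
        simpa using hane
    · -- approxRel
      refine ⟨by simp, by rw [hdetQ], ?_⟩
      simp
    · -- uniqueness
      rintro ⟨Q, φ⟩ ⟨⟨⟨hQPSD, hQcase⟩, hQ01⟩, hr1, hr2, hr3⟩
      simp only at hr1 hr2 hr3 hQ01 hQPSD
      have hQ10 : Q 1 0 = 0 := by rw [St18.herm10 hQPSD.1, hQ01]
      have hQ00 : Q 0 0 = P 0 0 := hr1.symm
      rw [Matrix.det_fin_two Q] at hr2
      rw [hQ00, hQ01, hQ10] at hr2
      have hQ11 : Q 1 1 = P.det / P 0 0 := by field_simp; linarith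
      rw [Prod.mk.injEq]
      constructor
      · rw [Matrix.eta_fin_two Q, hQ00, hQ01, hQ10, hQ11]
      · rw [hQ01] at hr3
        simp only [sub_zero] at hr3
        linarith
  · -- Part (ii): ψ = 0 representatives
    intro hp0 P ψ h
    obtain ⟨hPSD, hcase⟩ := h
    have h10 := St18.herm10 hPSD.1
    have ha : 0 < P 0 0 := St18.kappa1_pos hPSD hcase
    have hane : P 0 0 ≠ 0 := ne_of_gt ha
    have h2p : (2 : ℝ) * p ≠ 0 := by
      intro h0; exact hp0 (by linarith [mul_eq_zero.mp h0])
    have hd0 : 0 ≤ P.det := St18.det_nonneg2 hPSD ha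
    rcases hcase with ⟨_, hv1, hv2⟩ | ⟨hpz, _⟩
    swap
    · exact absurd hpz hp0
    set t : ℝ := P 0 1 - ψ * P 0 0 / (2 * p) with ht
    have hcd : P 0 0 * ((P.det + t * t) / P 0 0) - t * t = P.det := by field_simp; ring
    have hdetQ : (!![P 0 0, t; t, (P.det + t * t) / P 0 0]).det = P.det := by
      rw [Matrix.det_fin_two_of]; field_simp; try ring
    refine ⟨(!![P 0 0, t; t, (P.det + t * t) / P 0 0], 0),
      ⟨⟨⟨St18.psd_of _ _ _ ha (by rw [hcd]; exact hd0), ?_⟩, rfl⟩, ?_⟩, ?_⟩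
    · refine Or.inl ⟨hp0, ?_, ?_⟩
      · rw [St18.mulVec_pair]
        refine St18.vec_ne_zero 0 ?_
        simpa using hane
      · rw [St18.mulVec_pair]
        by_cases htz : t = 0
        · have hψ : ψ * P 0 0 = 2 * p * P 0 1 := by
            rw [ht] at htz; field_simp at htz; linarith
          have hdne : P.det ≠ 0 := fun hd => St18.detP_ne hp0 hPSD hv2 hane hψ hd
          refine St18.vec_ne_zero 1 ?_
          simp only [Matrix.cons_val_one, Matrix.head_cons]
          have e : (!![P 0 0, t; t, (P.det + t * t) / P 0 0]) 1 0 = t := by simp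
          have e2 : (!![P 0 0, t; t, (P.det + t * t) / P 0 0]) 1 1 =
              (P.det + t * t) / P 0 0 := by simp
          rw [e, e2, htz]
          intro hx
          apply hdne
          field_simp at hx
          simpa [hane, hp0] using hx
        · refine St18.vec_ne_zero 0 ?_
          simp only [Matrix.cons_val_zero]
          have e : (!![P 0 0, t; t, (P.det + t * t) / P 0 0]) 0 0 = P 0 0 := by simp
          have e2 : (!![P 0 0, t; t, (P.det + t * t) / P 0 0]) 0 1 = t := by simp
          rw [e, e2]
          intro hx
          apply htz
          have : t * (2 * p) = 0 := by linarith
          exact (mul_eq_zero.mp this).resolve_right h2p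
    · refine ⟨by simp, by rw [hdetQ], ?_⟩
      have e2 : (!![P 0 0, t; t, (P.det + t * t) / P 0 0]) 0 1 = t := by simp
      simp only [e2]
      simp only [ht, sub_zero]
      field_simp
      ring
    · rintro ⟨Q, φ⟩ ⟨⟨⟨hQPSD, hQcase⟩, hφ0⟩, hr1, hr2, hr3⟩
      simp only at hr1 hr2 hr3 hφ0 hQPSD
      subst hφ0
      have hQ00 : Q 0 0 = P 0 0 := hr1.symm
      have hQ01 : Q 0 1 = t := by
        rw [ht]
        field_simp at hr3 ⊢
        linear_combination hr3
      have hQ10 : Q 1 0 = t := by rw [St18.herm10 hQPSD.1, hQ01]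
      rw [Matrix.det_fin_two Q] at hr2
      rw [hQ00, hQ01, hQ10] at hr2
      have hQ11 : Q 1 1 = (P.det + t * t) / P 0 0 := by field_simp; linarith
      rw [Prod.mk.injEq]
      exact ⟨by rw [Matrix.eta_fin_two Q, hQ00, hQ01, hQ10, hQ11], rfl⟩
end
end
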